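/- Let A ∈ ℝ^{Ω×Ω} have nonnegative off-diagonal entries and columns summing to zero, let X be a partition of Ω, and suppose that for every β ∈ X the initial datum of the ODE dn/dt = An admits the representation n_β⁰ = ∫_{(−∞,0]} exp(−ξ A_{ββ}) m_β(dξ), where m_β is a vector of finite nonnegative Borel measures on (−∞,0] (one per state in β). Then the forcing function S_α⁰(t) = Σ_{β∈X∖{α}} A_{αβ} exp(t A_{ββ}) n_β⁰ of the generalized RFE associated to the ODE admits, for every t ≥ 0, the representation S_α⁰(t) = Σ_{β∈X∖{α}} ∫_{(−∞,0]} G_{βα}(t−ξ) m_β(dξ), where G_{βα}(s) = A_{αβ} exp(s A_{ββ}); consequently the generalized RFE for N_α(t) = Σ_{j∈α} n_j(t) can be reformulated as a structured population system with an age variable. -/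

import Mathlib

open MeasureTheory Matrix NormedSpace

open scoped BigOperators Nat

section ExpHelpers

variable {κ : Type*} [Fintype κ] [DecidableEq κ]

theorem entry_summable (M : Matrix κ κ ℝ) (i j : κ) :
    Summable fun k : ℕ => (k ! : ℝ)⁻¹ * (M ^ k) i j := by
  letI : SeminormedRing (Matrix κ κ ℝ) := Matrix.linftyOpSemiNormedRing
  letI : NormedRing (Matrix κ κ ℝ) := Matrix.linftyOpNormedRing
  letI : NormedAlgebra ℝ (Matrix κ κ ℝ) := Matrix.linftyOpNormedAlgebra
  have hs : Summable fun k : ℕ => (k ! : ℝ)⁻¹ • M ^ k := expSeries_summable' M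
  have := Pi.summable.mp (Pi.summable.mp hs i) j
  simpa [smul_eq_mul] using this

theorem entry_exp (M : Matrix κ κ ℝ) (i j : κ) :
    exp M i j = ∑' (k : ℕ), (k ! : ℝ)⁻¹ * (M ^ k) i j := by
  letI : SeminormedRing (Matrix κ κ ℝ) := Matrix.linftyOpSemiNormedRing
  letI : NormedRing (Matrix κ κ ℝ) := Matrix.linftyOpNormedRing
  letI : NormedAlgebra ℝ (Matrix κ κ ℝ) := Matrix.linftyOpNormedAlgebra
  have hs : Summable fun k : ℕ => (k ! : ℝ)⁻¹ • M ^ k := expSeries_summable' M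
  rw [exp_eq_tsum ℝ]
  show (∑' (k : ℕ), (k ! : ℝ)⁻¹ • M ^ k) i j = _
  refine ((Pi.hasSum.mp (Pi.hasSum.mp hs.hasSum i) j).tsum_eq.symm).trans ?_
  simp [smul_eq_mul]

theorem exp_entry_continuous (M : Matrix κ κ ℝ) (i j : κ) :
    Continuous fun s : ℝ => exp (s • M) i j := by
  letI : SeminormedRing (Matrix κ κ ℝ) := Matrix.linftyOpSemiNormedRing
  letI : NormedRing (Matrix κ κ ℝ) := Matrix.linftyOpNormedRing
  letI : NormedAlgebra ℝ (Matrix κ κ ℝ) := Matrix.linftyOpNormedAlgebra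
  letI : NormedAlgebra ℚ (Matrix κ κ ℝ) :=
    NormedAlgebra.restrictScalars (𝕜 := ℚ) (𝕜' := ℝ) (E := Matrix κ κ ℝ)
  have h1 : Continuous fun s : ℝ => exp (s • M) :=
    exp_continuous.comp (continuous_id.smul continuous_const)
  exact ((continuous_apply j).comp ((continuous_apply i).comp h1))

theorem pow_entry_nonneg {M : Matrix κ κ ℝ} (h : ∀ i j, 0 ≤ M i j) (k : ℕ) :
    ∀ i j, 0 ≤ (M ^ k) i j := by
  induction k with
  | zero => intro i j; rcases eq_or_ne i j with rfl | hij <;> simp [Matrix.one_apply, *]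
  | succ k ih =>
      intro i j
      rw [pow_succ, Matrix.mul_apply]
      exact Finset.sum_nonneg fun x _ => mul_nonneg (ih i x) (h x j)

theorem exp_entry_nonneg_of_nonneg {M : Matrix κ κ ℝ} (h : ∀ i j, 0 ≤ M i j) (i j : κ) :
    0 ≤ exp M i j := by
  rw [entry_exp]
  exact tsum_nonneg fun k => mul_nonneg (by positivity) (pow_entry_nonneg h k i j)

theorem exp_entry_nonneg {M : Matrix κ κ ℝ} (h : ∀ i j, i ≠ j → 0 ≤ M i j) (i j : κ) :
    0 ≤ exp M i j := by
  obtain ⟨c, hc⟩ : ∃ c : ℝ, ∀ i j, 0 ≤ (M + c • (1 : Matrix κ κ ℝ)) i j := by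
    obtain ⟨c, hc⟩ := Finset.exists_le (α := ℝ) (Finset.univ.image fun i : κ => -M i i)
    refine ⟨max c 0, fun a b => ?_⟩
    rcases eq_or_ne a b with rfl | hab
    · have : -M a a ≤ c := hc _ (Finset.mem_image_of_mem _ (Finset.mem_univ a))
      simp only [Matrix.add_apply, Matrix.smul_apply, Matrix.one_apply_eq, smul_eq_mul, mul_one]
      linarith [le_max_left c 0]
    · simpa [Matrix.one_apply, hab] using h a b hab
  have key : exp M = exp (M + c • (1 : Matrix κ κ ℝ)) * (Real.exp (-c) • 1) := by
    have hcomm : Commute (M + c • (1 : Matrix κ κ ℝ)) ((-c) • (1 : Matrix κ κ ℝ)) :=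
      Commute.add_left ((Commute.one_right M).smul_right _)
        (((Commute.one_right _).smul_left _).smul_right _)
    have h1 : exp M = exp ((M + c • (1 : Matrix κ κ ℝ)) + (-c) • (1 : Matrix κ κ ℝ)) := by
      congr 1
      rw [add_assoc, ← add_smul]
      simp
    rw [h1, Matrix.exp_add_of_commute _ _ hcomm]
    congr 1
    have h2 : ((-c) • (1 : Matrix κ κ ℝ)) = algebraMap ℝ (Matrix κ κ ℝ) (-c) := by
      rw [Algebra.algebraMap_eq_smul_one]
    rw [h2]
    letI : SeminormedRing (Matrix κ κ ℝ) := Matrix.linftyOpSemiNormedRing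
    letI : NormedRing (Matrix κ κ ℝ) := Matrix.linftyOpNormedRing
    letI : NormedAlgebra ℝ (Matrix κ κ ℝ) := Matrix.linftyOpNormedAlgebra
    have := algebraMap_exp_comm (𝕂 := ℝ) (𝔸 := Matrix κ κ ℝ) (-c)
    rw [Algebra.algebraMap_eq_smul_one, ← Real.exp_eq_exp_ℝ] at this
    exact this.symm
  rw [key]
  have h0 := exp_entry_nonneg_of_nonneg hc
  rw [Matrix.mul_apply]
  refine Finset.sum_nonneg fun x _ => mul_nonneg (h0 i x) ?_
  simp only [Matrix.smul_apply, smul_eq_mul]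
  rcases eq_or_ne x j with rfl | hxj <;> simp [Matrix.one_apply, *, (Real.exp_pos _).le]

theorem colsum_pow {M : Matrix κ κ ℝ} (h : ∀ j, ∑ i, M i j = 0) (k : ℕ) (j : κ) :
    ∑ i, (M ^ (k + 1)) i j = 0 := by
  induction k with
  | zero => simpa using h j
  | succ k ih =>
      have : ∀ i, (M ^ (k + 2)) i j = ∑ x, M i x * (M ^ (k + 1)) x j := by
        intro i; rw [pow_succ']; exact Matrix.mul_apply
      simp_rw [this]
      rw [Finset.sum_comm]
      simp_rw [← Finset.sum_mul, h]
      simp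

theorem colsum_exp {M : Matrix κ κ ℝ} (h : ∀ j, ∑ i, M i j = 0) (j : κ) :
    ∑ i, exp M i j = 1 := by
  simp_rw [entry_exp]
  rw [← Summable.tsum_finsetSum (fun i _ => entry_summable M i j)]
  have : ∀ k : ℕ, (∑ i, (k ! : ℝ)⁻¹ * (M ^ k) i j) = if k = 0 then 1 else 0 := by
    intro k
    rw [← Finset.mul_sum]
    cases k with
    | zero => simp [Matrix.one_apply, Finset.sum_ite_eq]
    | succ k => simp [colsum_pow h k j]
  simp_rw [this]
  rw [tsum_eq_single 0] <;> simp

/-- the extension of a substochastic generator to `Option κ` with a cemetery state -/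
def extQ (M : Matrix κ κ ℝ) : Matrix (Option κ) (Option κ) ℝ :=
  fun a b =>
    match a, b with
    | some i, some j => M i j
    | none, some j => -∑ i, M i j
    | _, none => 0

theorem extQ_pow (M : Matrix κ κ ℝ) (k : ℕ) (i j : κ) :
    ((extQ M) ^ k) (some i) (some j) = (M ^ k) i j := by
  induction k generalizing i with
  | zero => simp [Matrix.one_apply, extQ, Option.some_inj]
  | succ k ih =>
      rw [pow_succ', pow_succ', Matrix.mul_apply, Matrix.mul_apply, Fintype.sum_option]
      simp only [extQ]
      simp [ih]

theorem exp_entry_le_one {M : Matrix κ κ ℝ} (hoff : ∀ i j, i ≠ j → 0 ≤ M i j)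
    (hcol : ∀ j, ∑ i, M i j ≤ 0) (i j : κ) : exp M i j ≤ 1 := by
  set Q := extQ M with hQ
  have hoffQ : ∀ a b, a ≠ b → 0 ≤ Q a b := by
    rintro (_ | a) (_ | b) hab <;> simp only [hQ, extQ] <;> try simp
    · simpa using hcol b
    · exact hoff a b (by simpa using hab)
  have hcolQ : ∀ b, ∑ a, Q a b = 0 := by
    rintro (_ | b)
    · simp [hQ, extQ, Fintype.sum_option]
    · rw [Fintype.sum_option]
      simp [hQ, extQ]
  have hexp : exp M i j = exp Q (some i) (some j) := by
    rw [entry_exp, entry_exp]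
    congr 1; ext k; rw [extQ_pow]
  rw [hexp]
  calc exp Q (some i) (some j) ≤ ∑ a, exp Q a (some j) :=
        Finset.single_le_sum (fun a _ => exp_entry_nonneg hoffQ a (some j)) (Finset.mem_univ _)
    _ = 1 := colsum_exp hcolQ (some j)

end ExpHelpers


variable {Ω X : Type*}

/-- The block `A_{αβ}` of a matrix `A : ℝ^{Ω×Ω}` with respect to the partition of `Ω`
into the fibers of `π : Ω → X`. -/
def blockM [DecidableEq X] (A : Matrix Ω Ω ℝ) (π : Ω → X) (α β : X) :
    Matrix {i : Ω // π i = α} {j : Ω // π j = β} ℝ :=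
  fun i j => A i.1 j.1

/-- **Initial data of ODEs compatible with a structured-population reformulation.**
If the initial datum of `dn/dt = An` admits the representation
`n_β⁰ = ∫_{(−∞,0]} e^{−ξA_{ββ}} m_β(dξ)` for vectors `m_β` of finite nonnegative measures
on `(−∞,0]`, then the forcing function `S_α⁰(t) = ∑_{β≠α} A_{αβ}e^{tA_{ββ}} n_β⁰` of the
associated generalized RFE admits the representation
`S_α⁰(t) = ∑_{β≠α} ∫_{(−∞,0]} G_{βα}(t−ξ) m_β(dξ)` with `G_{βα}(s) = A_{αβ}e^{sA_{ββ}}`;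
consequently the generalized RFE for `N_α` can be reformulated as a structured population
system with an age variable. -/
theorem ode_initial_data_age_structure [Fintype Ω] [DecidableEq Ω] [Fintype X] [DecidableEq X]
    (A : Matrix Ω Ω ℝ) (π : Ω → X)
    (hoffdiag : ∀ i j, i ≠ j → 0 ≤ A i j)
    (hcolsum : ∀ j, ∑ i, A i j = 0)
    (n : ℝ → Ω → ℝ) (n0 : Ω → ℝ)
    (hODE : ∀ i t, HasDerivAt (fun s => n s i) (A.mulVec (n t) i) t)
    (hinit : n 0 = n0)
    -- `m_β`: vectors of finite nonnegative measures supported on `(−∞,0]`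
    (m : (β : X) → {j : Ω // π j = β} → Measure ℝ)
    (hm_fin : ∀ β j, IsFiniteMeasure (m β j))
    (hm_supp : ∀ β j, m β j (Set.Ioi 0) = 0)
    -- the representation `n_β⁰ = ∫_{(−∞,0]} e^{−ξ A_{ββ}} m_β(dξ)` (entrywise)
    (hrep : ∀ (β : X) (i : {i : Ω // π i = β}),
        n0 i.1 = ∑ j : {j : Ω // π j = β},
          ∫ ξ in Set.Iic (0:ℝ), exp ((-ξ) • blockM A π β β) i j ∂(m β j)) :
    -- the representation of the forcing function `S_α⁰`
    ∀ (α : X) (t : ℝ), 0 ≤ t → ∀ i : {i : Ω // π i = α},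
      (∑ β ∈ Finset.univ.erase α,
        (blockM A π α β * exp (t • blockM A π β β)).mulVec (fun j => n0 j.1) i) =
      ∑ β ∈ Finset.univ.erase α, ∑ j : {j : Ω // π j = β},
        ∫ ξ in Set.Iic (0:ℝ),
          (blockM A π α β * exp ((t - ξ) • blockM A π β β)) i j ∂(m β j) := by
  intro α t ht i
  refine Finset.sum_congr rfl fun β _ => ?_
  set B := blockM A π α β with hB
  set C := blockM A π β β with hC
  -- structural facts about the block C
  have hoffC : ∀ p q : {j : Ω // π j = β}, p ≠ q → 0 ≤ C p q := by
    intro p q hpq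
    exact hoffdiag p.1 q.1 (fun h => hpq (Subtype.ext h))
  have hcolC : ∀ q : {j : Ω // π j = β}, ∑ p, C p q ≤ 0 := by
    intro q
    have h1 : ∑ p : {j : Ω // π j = β}, C p q
        = ∑ i ∈ Finset.univ.filter (fun i => π i = β), A i q.1 := by
      exact (Finset.sum_subtype (Finset.univ.filter (fun i => π i = β))
        (fun i => by simp) (fun i => A i q.1)).symm
    have h2 : (∑ i ∈ Finset.univ.filter (fun i => π i = β), A i q.1)
        + ∑ i ∈ Finset.univ.filter (fun i => ¬ π i = β), A i q.1 = 0 := by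
      rw [Finset.sum_filter_add_sum_filter_not]
      exact hcolsum q.1
    have h3 : 0 ≤ ∑ i ∈ Finset.univ.filter (fun i => ¬ π i = β), A i q.1 := by
      refine Finset.sum_nonneg fun x hx => ?_
      refine hoffdiag x q.1 fun h => ?_
      rw [Finset.mem_filter] at hx
      exact hx.2 (h ▸ q.2)
    linarith [h1, h2, h3]
  -- entries of exp (s • C) lie in [0,1] for s ≥ 0
  have hbound : ∀ s : ℝ, 0 ≤ s → ∀ p q : {j : Ω // π j = β},
      exp (s • C) p q ∈ Set.Icc (0:ℝ) 1 := by
    intro s hs p q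
    have hoff' : ∀ p q : {j : Ω // π j = β}, p ≠ q → 0 ≤ (s • C) p q := by
      intro p q hpq
      simpa using mul_nonneg hs (hoffC p q hpq)
    have hcol' : ∀ q : {j : Ω // π j = β}, ∑ p, (s • C) p q ≤ 0 := by
      intro q
      simp only [Matrix.smul_apply, smul_eq_mul, ← Finset.mul_sum]
      exact mul_nonpos_of_nonneg_of_nonpos hs (hcolC q)
    exact ⟨exp_entry_nonneg hoff' p q, exp_entry_le_one hoff' hcol' p q⟩
  -- integrability of the exponential entries
  have hint : ∀ (s : ℝ), 0 ≤ s → ∀ (p q : {j : Ω // π j = β}) (μ : Measure ℝ)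
      [IsFiniteMeasure μ],
      Integrable (fun ξ => exp ((s - ξ) • C) p q) (μ.restrict (Set.Iic 0)) := by
    intro s hs p q μ _
    refine Integrable.mono' (integrable_const 1)
      (((exp_entry_continuous C p q).comp (continuous_const.sub continuous_id)).aestronglyMeasurable)
      ?_
    rw [ae_restrict_iff' measurableSet_Iic]
    refine ae_of_all _ fun ξ hξ => ?_
    have h01 := hbound (s - ξ) (by simp only [Set.mem_Iic] at hξ; linarith) p q
    rw [Real.norm_eq_abs, abs_le]
    exact ⟨by linarith [h01.1], h01.2⟩
  haveI : ∀ k : {j : Ω // π j = β}, IsFiniteMeasure (m β k) := hm_fin β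
  -- main computation
  have hmv : ((B * exp (t • C)) *ᵥ fun j => n0 j.1) i
      = ∑ j : {j : Ω // π j = β}, (B * exp (t • C)) i j * n0 j.1 := by
    simp [Matrix.mulVec, dotProduct]
  rw [hmv]
  calc
    ∑ j : {j : Ω // π j = β}, (B * exp (t • C)) i j * n0 j.1
      = ∑ j : {j : Ω // π j = β}, ∑ k : {j : Ω // π j = β},
          (B * exp (t • C)) i j *
            ∫ ξ in Set.Iic (0:ℝ), exp ((-ξ) • C) j k ∂(m β k) := by
        refine Finset.sum_congr rfl fun j _ => ?_
        rw [hrep β j, Finset.mul_sum]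
    _ = ∑ k : {j : Ω // π j = β}, ∑ j : {j : Ω // π j = β},
          ∫ ξ in Set.Iic (0:ℝ),
            (B * exp (t • C)) i j * exp ((-ξ) • C) j k ∂(m β k) := by
        rw [Finset.sum_comm]
        refine Finset.sum_congr rfl fun k _ => Finset.sum_congr rfl fun j _ => ?_
        rw [MeasureTheory.integral_const_mul]
    _ = ∑ k : {j : Ω // π j = β},
          ∫ ξ in Set.Iic (0:ℝ), ∑ j : {j : Ω // π j = β},
            (B * exp (t • C)) i j * exp ((-ξ) • C) j k ∂(m β k) := by
        refine Finset.sum_congr rfl fun k _ => ?_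
        rw [MeasureTheory.integral_finset_sum]
        intro j _
        have : (fun ξ : ℝ => exp ((-ξ) • C) j k)
            = fun ξ : ℝ => exp ((0 - ξ) • C) j k := by
          funext ξ; rw [zero_sub]
        exact Integrable.const_mul (by rw [this]; exact hint 0 le_rfl j k (m β k)) _
    _ = ∑ k : {j : Ω // π j = β},
          ∫ ξ in Set.Iic (0:ℝ), (B * exp ((t - ξ) • C)) i k ∂(m β k) := by
        refine Finset.sum_congr rfl fun k _ => ?_
        refine MeasureTheory.integral_congr_ae (ae_of_all _ fun ξ => ?_)
        have hmul : exp (t • C) * exp ((-ξ) • C) = exp ((t - ξ) • C) := by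
          rw [← Matrix.exp_add_of_commute _ _
            (((Commute.refl C).smul_left t).smul_right (-ξ)), ← add_smul]
          ring_nf
        calc ∑ j : {j : Ω // π j = β},
              (B * exp (t • C)) i j * exp ((-ξ) • C) j k
            = (B * exp (t • C) * exp ((-ξ) • C)) i k := (Matrix.mul_apply).symm
          _ = (B * exp ((t - ξ) • C)) i k := by rw [Matrix.mul_assoc, hmul]
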